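/- Suppose (X,β) of K3^[n] type satisfies (β,β) = −2 + Σ_{i=1}^{n−1} 2d_i − (Σ r_i)²/(2n−2) and ±[β] = ±[Σ r_i] for integers d_i, r_i with 2d_i − r_i²/2 ≥ 0. Then the coefficient (φ^{n−1}/Δ)_β is strictly positive, where φ = (−℘ + E_2/12)Θ²; conversely if (φ^{n−1}/Δ)_β > 0 then such integers exist. -/

import Mathlib

/-!
STATEMENT 15. (Criterion of Theorem 1 / Theorem A3.)  For (X,β) of K3^[n] type
with β primitive, the coefficient (φ^{n−1}/Δ)_β is strictly positive if and
only if
  (β,β) = −2 + Σᵢ 2dᵢ − (Σᵢ rᵢ)²/(2n−2)  and  ±[β] = ±[Σᵢ rᵢ]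
for some integers dᵢ, rᵢ (i = 1,…,n−1) with 2dᵢ − rᵢ²/2 ≥ 0.
Here the coefficient at (d,r) represents β with (β,β) = 2d − r²/(2n−2) and
residue ±[r] mod 2n−2; φ = (−℘ + E₂/12)Θ², whose coefficients are the
convolution squares of the theta coefficients, and 1/Δ has coefficients p24.
-/

/-- The number of `c`-colored partitions of `k`. -/
noncomputable def coloredPartitions (c k : ℕ) : ℕ :=
  ∑ t ∈ Finset.Nat.antidiagonalTuple c k, ∏ i, Fintype.card (Nat.Partition (t i))

/-- Coefficient of `q^k` in `∏_{m≥1}(1-q^m)^{-3}`. -/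
noncomputable def p3 (k : ℤ) : ℕ :=
  if 0 ≤ k then coloredPartitions 3 k.toNat else 0

/-- Coefficient of `q^k` in `1/Δ = q^{-1} ∏_{m≥1}(1-q^m)^{-24}`. -/
noncomputable def p24 (k : ℤ) : ℕ :=
  if 0 ≤ k + 1 then coloredPartitions 24 (k + 1).toNat else 0

open Classical in
/-- The coefficient `c(n,r)` of `q^n y^r` in `Θ`, via the Jacobi triple product. -/
noncomputable def thetaCoeff (n : ℤ) (r : ℚ) : ℝ :=
  if h : ∃ s : ℤ, r = (s : ℚ) + 1/2 then
    (p3 (n - (h.choose ^ 2 + h.choose) / 2) : ℝ)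
  else 0

/-- The coefficient of `q^d y^r` in `φ = (−℘ + E₂/12)Θ² = Θ·D_y²Θ − (D_yΘ)²`. -/
noncomputable def phiCoeff (d r : ℤ) : ℝ :=
  (1/2) * ∑' p : ℤ × ℤ,
    thetaCoeff p.1 ((p.2 : ℚ) + 1/2) * thetaCoeff (d - p.1) ((r : ℚ) - (p.2 : ℚ) - 1/2) *
      (((p.2 : ℝ) + 1/2) - ((r : ℝ) - (p.2 : ℝ) - 1/2)) ^ 2

/-- Coefficients of the powers `φ^k`. -/
noncomputable def phiPow : ℕ → ℤ → ℤ → ℝ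
  | 0, d, r => if d = 0 ∧ r = 0 then 1 else 0
  | (k + 1), d, r => ∑' p : ℤ × ℤ, phiCoeff p.1 p.2 * phiPow k (d - p.1) (r - p.2)

/-- The coefficient of `q^d y^r` in `φ^{n-1}/Δ`. -/
noncomputable def FCoeff (n : ℕ) (d r : ℤ) : ℝ :=
  ∑' e : ℤ, phiPow (n - 1) e r * (p24 (d - e) : ℝ)

lemma coloredPartitions_pos (c k : ℕ) (hc : 0 < c) : 0 < coloredPartitions c k := by
  unfold coloredPartitions
  obtain ⟨c', rfl⟩ : ∃ c', c = c' + 1 := ⟨c - 1, by omega⟩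
  apply Finset.sum_pos'
  · intro i _; positivity
  · refine ⟨Fin.cons k 0, ?_, ?_⟩
    · rw [Finset.Nat.mem_antidiagonalTuple, Fin.sum_cons]; simp
    · apply Finset.prod_pos
      intro i _
      exact Fintype.card_pos_iff.mpr ⟨Nat.Partition.indiscrete _⟩
lemma p3_pos (k : ℤ) : 0 < p3 k ↔ 0 ≤ k := by
  unfold p3; split <;> simp_all [coloredPartitions_pos]
lemma p24_pos (k : ℤ) : 0 < p24 k ↔ -1 ≤ k := by
  unfold p24; constructor
  · intro h; by_contra hk; rw [if_neg (by omega)] at h; simp at h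
  · intro h; rw [if_pos (by omega)]; exact coloredPartitions_pos _ _ (by norm_num)
lemma theta_eq (n s : ℤ) :
    thetaCoeff n ((s : ℚ) + 1/2) = (p3 (n - (s ^ 2 + s) / 2) : ℝ) := by
  unfold thetaCoeff
  have h : ∃ s' : ℤ, (s : ℚ) + 1/2 = (s' : ℚ) + 1/2 := ⟨s, rfl⟩
  rw [dif_pos h]
  have : h.choose = s := by
    have := h.choose_spec
    have : ((h.choose : ℚ)) = (s : ℚ) := by linarith
    exact_mod_cast this
  rw [this]
lemma theta_nonneg (n : ℤ) (r : ℚ) : 0 ≤ thetaCoeff n r := by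
  unfold thetaCoeff; split <;> positivity
lemma theta_pos (n s : ℤ) :
    0 < thetaCoeff n ((s : ℚ) + 1/2) ↔ s ^ 2 + s ≤ 2 * n := by
  rw [theta_eq]
  obtain ⟨c, hc⟩ : Even (s ^ 2 + s) := by
    have := Int.even_mul_succ_self s
    have h2 : s * (s + 1) = s ^ 2 + s := by ring
    rwa [h2] at this
  rw [show (0:ℝ) < (p3 (n - (s ^ 2 + s) / 2) : ℝ) ↔ 0 < p3 (n - (s ^ 2 + s) / 2) by
    exact_mod_cast Iff.rfl, p3_pos]
  omega
noncomputable def phiTerm (d r : ℤ) (p : ℤ × ℤ) : ℝ :=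
  thetaCoeff p.1 ((p.2 : ℚ) + 1/2) * thetaCoeff (d - p.1) ((r : ℚ) - (p.2 : ℚ) - 1/2) *
      (((p.2 : ℝ) + 1/2) - ((r : ℝ) - (p.2 : ℝ) - 1/2)) ^ 2
lemma phiTerm_eq (d r : ℤ) (p : ℤ × ℤ) :
    phiTerm d r p = (p3 (p.1 - (p.2 ^ 2 + p.2) / 2) : ℝ) *
      (p3 (d - p.1 - ((r - p.2 - 1) ^ 2 + (r - p.2 - 1)) / 2) : ℝ) *
      (2 * (p.2 : ℝ) + 1 - (r : ℝ)) ^ 2 := by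
  unfold phiTerm
  have h1 : ((r : ℚ) - (p.2 : ℚ) - 1/2) = ((r - p.2 - 1 : ℤ) : ℚ) + 1/2 := by
    push_cast; ring
  rw [h1, theta_eq, theta_eq]
  ring
lemma phiTerm_nonneg (d r : ℤ) (p : ℤ × ℤ) : 0 ≤ phiTerm d r p := by
  unfold phiTerm
  have := theta_nonneg p.1 ((p.2 : ℚ) + 1/2)
  have := theta_nonneg (d - p.1) ((r : ℚ) - (p.2 : ℚ) - 1/2)
  positivity
lemma phiTerm_pos_iff (d r : ℤ) (p : ℤ × ℤ) :
    0 < phiTerm d r p ↔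
      p.2 ^ 2 + p.2 ≤ 2 * p.1 ∧
      (r - p.2 - 1) ^ 2 + (r - p.2 - 1) ≤ 2 * (d - p.1) ∧ 2 * p.2 + 1 ≠ r := by
  rw [phiTerm_eq]
  constructor
  · intro h
    have h1 : 0 < p3 (p.1 - (p.2 ^ 2 + p.2) / 2) := by
      rcases Nat.eq_zero_or_pos (p3 (p.1 - (p.2 ^ 2 + p.2) / 2)) with h0 | h0
      · rw [h0] at h; simp at h
      · exact h0
    have h2 : 0 < p3 (d - p.1 - ((r - p.2 - 1) ^ 2 + (r - p.2 - 1)) / 2) := by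
      rcases Nat.eq_zero_or_pos (p3 (d - p.1 - ((r - p.2 - 1) ^ 2 + (r - p.2 - 1)) / 2)) with h0 | h0
      · rw [h0] at h; simp at h
      · exact h0
    have h3 : (2 * (p.2 : ℝ) + 1 - (r : ℝ)) ^ 2 ≠ 0 := by
      intro h0; rw [h0] at h; simp at h
    refine ⟨?_, ?_, ?_⟩
    · have := (p3_pos _).mp h1
      obtain ⟨c, hc⟩ : Even (p.2 ^ 2 + p.2) := by
        have := Int.even_mul_succ_self p.2
        have h2 : p.2 * (p.2 + 1) = p.2 ^ 2 + p.2 := by ring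
        rwa [h2] at this
      omega
    · have := (p3_pos _).mp h2
      obtain ⟨c, hc⟩ : Even ((r - p.2 - 1) ^ 2 + (r - p.2 - 1)) := by
        have := Int.even_mul_succ_self (r - p.2 - 1)
        have h2 : (r - p.2 - 1) * ((r - p.2 - 1) + 1) = (r - p.2 - 1) ^ 2 + (r - p.2 - 1) := by ring
        rwa [h2] at this
      omega
    · intro h0
      apply h3
      have heq : (2 * (p.2 : ℝ) + 1 - (r : ℝ)) = 0 := by
        have h5 : ((2 * p.2 + 1 : ℤ) : ℝ) = ((r : ℤ) : ℝ) := by exact_mod_cast h0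
        push_cast at h5; linarith
      rw [heq]; ring
  · rintro ⟨h1, h2, h3⟩
    obtain ⟨c1, hc1⟩ : Even (p.2 ^ 2 + p.2) := by
      have := Int.even_mul_succ_self p.2
      have h' : p.2 * (p.2 + 1) = p.2 ^ 2 + p.2 := by ring
      rwa [h'] at this
    obtain ⟨c2, hc2⟩ : Even ((r - p.2 - 1) ^ 2 + (r - p.2 - 1)) := by
      have := Int.even_mul_succ_self (r - p.2 - 1)
      have h' : (r - p.2 - 1) * ((r - p.2 - 1) + 1) = (r - p.2 - 1) ^ 2 + (r - p.2 - 1) := by ring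
      rwa [h'] at this
    have hp1 : 0 < p3 (p.1 - (p.2 ^ 2 + p.2) / 2) := (p3_pos _).mpr (by omega)
    have hp2 : 0 < p3 (d - p.1 - ((r - p.2 - 1) ^ 2 + (r - p.2 - 1)) / 2) := (p3_pos _).mpr (by omega)
    have hp3 : (0:ℝ) < (2 * (p.2 : ℝ) + 1 - (r : ℝ)) ^ 2 := by
      have : (2 * (p.2 : ℝ) + 1 - (r : ℝ)) ≠ 0 := by
        intro h0
        apply h3
        have h5 : ((2 * p.2 + 1 : ℤ) : ℝ) = ((r : ℤ) : ℝ) := by push_cast; linarith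
        exact Int.cast_injective h5
      positivity
    have hp1' : (0:ℝ) < (p3 (p.1 - (p.2 ^ 2 + p.2) / 2) : ℝ) := by exact_mod_cast hp1
    have hp2' : (0:ℝ) < (p3 (d - p.1 - ((r - p.2 - 1) ^ 2 + (r - p.2 - 1)) / 2) : ℝ) := by
      exact_mod_cast hp2
    positivity
lemma phiTerm_support (d r : ℤ) (p : ℤ × ℤ)
    (h : p ∉ Finset.Icc (0:ℤ) d ×ˢ Finset.Icc (-(2*d+2)) (2*d+2)) : phiTerm d r p = 0 := by
  by_contra hne
  have hpos : 0 < phiTerm d r p := lt_of_le_of_ne (phiTerm_nonneg d r p) (Ne.symm hne)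
  obtain ⟨h1, h2, _⟩ := (phiTerm_pos_iff d r p).mp hpos
  apply h
  rw [Finset.mem_product, Finset.mem_Icc, Finset.mem_Icc]
  have hsq1 : 0 ≤ p.2 ^ 2 + p.2 := by nlinarith [sq_nonneg (2 * p.2 + 1)]
  have hsq2 : 0 ≤ (r - p.2 - 1) ^ 2 + (r - p.2 - 1) := by nlinarith [sq_nonneg (2 * (r - p.2 - 1) + 1)]
  constructor
  · omega
  · constructor <;> nlinarith
lemma phiCoeff_eq_sum (d r : ℤ) :
    phiCoeff d r = (1/2) * ∑ p ∈ Finset.Icc (0:ℤ) d ×ˢ Finset.Icc (-(2*d+2)) (2*d+2),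
      phiTerm d r p := by
  have h0 : phiCoeff d r = (1/2) * ∑' p : ℤ × ℤ, phiTerm d r p := rfl
  rw [h0, tsum_eq_sum (s := Finset.Icc (0:ℤ) d ×ˢ Finset.Icc (-(2*d+2)) (2*d+2))]
  intro b hb
  exact phiTerm_support d r b hb
lemma phiCoeff_nonneg (d r : ℤ) : 0 ≤ phiCoeff d r := by
  rw [phiCoeff_eq_sum]
  have : 0 ≤ ∑ p ∈ Finset.Icc (0:ℤ) d ×ˢ Finset.Icc (-(2*d+2)) (2*d+2), phiTerm d r p :=
    Finset.sum_nonneg fun p _ => phiTerm_nonneg d r p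
  linarith
lemma phiCoeff_pos_iff (d r : ℤ) : 0 < phiCoeff d r ↔ r ^ 2 ≤ 4 * d := by
  rw [phiCoeff_eq_sum]
  constructor
  · intro h
    have h' : 0 < ∑ p ∈ Finset.Icc (0:ℤ) d ×ˢ Finset.Icc (-(2*d+2)) (2*d+2), phiTerm d r p := by
      linarith
    obtain ⟨p, _, hp⟩ : ∃ p ∈ Finset.Icc (0:ℤ) d ×ˢ Finset.Icc (-(2*d+2)) (2*d+2),
        0 < phiTerm d r p := by
      by_contra hc
      push_neg at hc
      have : ∑ p ∈ Finset.Icc (0:ℤ) d ×ˢ Finset.Icc (-(2*d+2)) (2*d+2), phiTerm d r p = 0 := by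
        apply Finset.sum_eq_zero
        intro p hp
        exact le_antisymm (hc p hp) (phiTerm_nonneg d r p)
      rw [this] at h'; exact lt_irrefl _ h'
    obtain ⟨h1, h2, h3⟩ := (phiTerm_pos_iff d r p).mp hp
    have ha : p.2 - (r - p.2 - 1) ≠ 0 := by omega
    have h4 : 1 ≤ (p.2 - (r - p.2 - 1)) ^ 2 := by
      rcases ha.lt_or_gt with hl | hl <;> nlinarith
    nlinarith [h1, h2, h4]
  · intro h
    -- witness
    obtain ⟨m, hm | hm⟩ := Int.even_or_odd' r
    · -- r = 2m : s = m, n₁ = (m²+m)/2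
      obtain ⟨c, hc⟩ : Even (m ^ 2 + m) := by
        have := Int.even_mul_succ_self m
        have h' : m * (m + 1) = m ^ 2 + m := by ring
        rwa [h'] at this
      have hpos : 0 < phiTerm d r (c, m) := by
        rw [phiTerm_pos_iff]
        refine ⟨?_, ?_, ?_⟩
        · show m ^ 2 + m ≤ 2 * c
          linarith
        · show (r - m - 1) ^ 2 + (r - m - 1) ≤ 2 * (d - c)
          have h4 : (2 * m) ^ 2 ≤ 4 * d := hm ▸ h
          have hd : m ^ 2 ≤ d := by nlinarith [h4]
          rw [show r - m - 1 = m - 1 from by omega]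
          nlinarith [hd, hc]
        · show 2 * m + 1 ≠ r
          omega
      have hmem : (c, m) ∈ Finset.Icc (0:ℤ) d ×ˢ Finset.Icc (-(2*d+2)) (2*d+2) := by
        by_contra hmem
        rw [phiTerm_support d r _ hmem] at hpos; exact lt_irrefl _ hpos
      have := Finset.sum_pos' (fun q _ => phiTerm_nonneg d r q) ⟨_, hmem, hpos⟩
      linarith
    · -- r = 2m+1 : s = m+1, n₁ = ((m+1)²+(m+1))/2
      obtain ⟨c, hc⟩ : Even ((m+1) ^ 2 + (m+1)) := by
        have := Int.even_mul_succ_self (m+1)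
        have h' : (m+1) * ((m+1) + 1) = (m+1) ^ 2 + (m+1) := by ring
        rwa [h'] at this
      have hpos : 0 < phiTerm d r (c, m + 1) := by
        rw [phiTerm_pos_iff]
        refine ⟨?_, ?_, ?_⟩
        · show (m + 1) ^ 2 + (m + 1) ≤ 2 * c
          linarith
        · show (r - (m + 1) - 1) ^ 2 + (r - (m + 1) - 1) ≤ 2 * (d - c)
          have h4 : (2 * m + 1) ^ 2 ≤ 4 * d := hm ▸ h
          have h5 : 4 * (m ^ 2 + m) < 4 * d := by nlinarith [h4]
          have h6 : m ^ 2 + m < d := by linarith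
          have h7 : m ^ 2 + m + 1 ≤ d := h6
          rw [show r - (m + 1) - 1 = m - 1 from by omega]
          nlinarith [h7, hc]
        · show 2 * (m + 1) + 1 ≠ r
          omega
      have hmem : (c, m + 1) ∈ Finset.Icc (0:ℤ) d ×ˢ Finset.Icc (-(2*d+2)) (2*d+2) := by
        by_contra hmem
        rw [phiTerm_support d r _ hmem] at hpos; exact lt_irrefl _ hpos
      have := Finset.sum_pos' (fun q _ => phiTerm_nonneg d r q) ⟨_, hmem, hpos⟩
      linarith
lemma phiCoeff_ne_iff (d r : ℤ) : phiCoeff d r ≠ 0 ↔ r ^ 2 ≤ 4 * d := by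
  constructor
  · intro h
    exact (phiCoeff_pos_iff d r).mp (lt_of_le_of_ne (phiCoeff_nonneg d r) (Ne.symm h))
  · intro h
    exact ne_of_gt ((phiCoeff_pos_iff d r).mpr h)
lemma phiPow_nonneg : ∀ (k : ℕ) (d r : ℤ), 0 ≤ phiPow k d r
  | 0, d, r => by unfold phiPow; split <;> norm_num
  | (k + 1), d, r => by
      unfold phiPow
      exact tsum_nonneg fun p => mul_nonneg (phiCoeff_nonneg p.1 p.2)
        (phiPow_nonneg k (d - p.1) (r - p.2))
lemma phiPow_supp : ∀ (k : ℕ) (d r : ℤ), phiPow k d r ≠ 0 → 0 ≤ d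
  | 0, d, r => by unfold phiPow; split <;> simp_all
  | (k + 1), d, r => by
      unfold phiPow
      intro h
      obtain ⟨p, hp⟩ : ∃ p : ℤ × ℤ, phiCoeff p.1 p.2 * phiPow k (d - p.1) (r - p.2) ≠ 0 := by
        by_contra hc
        push_neg at hc
        exact h ((tsum_congr hc).trans tsum_zero)
      obtain ⟨h1, h2⟩ := mul_ne_zero_iff.mp hp
      have h3 := (phiCoeff_ne_iff _ _).mp h1
      have h4 := phiPow_supp k _ _ h2
      nlinarith [sq_nonneg p.2]
lemma phiPow_term_supp (k : ℕ) (d r : ℤ) (p : ℤ × ℤ)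
    (hp : p ∉ Finset.Icc (0:ℤ) d ×ˢ Finset.Icc (-(2*d+2)) (2*d+2)) :
    phiCoeff p.1 p.2 * phiPow k (d - p.1) (r - p.2) = 0 := by
  by_contra h
  obtain ⟨h1, h2⟩ := mul_ne_zero_iff.mp h
  have h3 := (phiCoeff_ne_iff _ _).mp h1
  have h4 := phiPow_supp k _ _ h2
  apply hp
  rw [Finset.mem_product, Finset.mem_Icc, Finset.mem_Icc]
  have h5 : 0 ≤ p.1 := by nlinarith [sq_nonneg p.2]
  refine ⟨⟨h5, by omega⟩, ?_, ?_⟩ <;> nlinarith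
lemma phiPow_pos_iff : ∀ (k : ℕ) (d r : ℤ),
    0 < phiPow k d r ↔ ∃ dd rr : Fin k → ℤ,
      (∀ i, rr i ^ 2 ≤ 4 * dd i) ∧ ∑ i, dd i = d ∧ ∑ i, rr i = r
  | 0, d, r => by
      unfold phiPow
      constructor
      · intro h
        split at h
        · exact ⟨0, 0, fun i => i.elim0, by simp_all⟩
        · norm_num at h
      · rintro ⟨dd, rr, _, h1, h2⟩
        simp only [Finset.univ_eq_empty, Finset.sum_empty] at h1 h2
        rw [if_pos ⟨h1.symm, h2.symm⟩]; norm_num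
  | (k + 1), d, r => by
      unfold phiPow
      constructor
      · intro h
        obtain ⟨p, hp⟩ : ∃ p : ℤ × ℤ, phiCoeff p.1 p.2 * phiPow k (d - p.1) (r - p.2) ≠ 0 := by
          by_contra hc
          push_neg at hc
          rw [(tsum_congr hc).trans tsum_zero] at h
          exact lt_irrefl _ h
        obtain ⟨h1, h2⟩ := mul_ne_zero_iff.mp hp
        have h3 := (phiCoeff_ne_iff _ _).mp h1
        have h4 : 0 < phiPow k (d - p.1) (r - p.2) :=
          lt_of_le_of_ne (phiPow_nonneg _ _ _) (Ne.symm h2)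
        obtain ⟨dd, rr, hle, hd, hr⟩ := (phiPow_pos_iff k (d - p.1) (r - p.2)).mp h4
        refine ⟨Fin.cons p.1 dd, Fin.cons p.2 rr, ?_, ?_, ?_⟩
        · intro i
          refine Fin.cases ?_ ?_ i
          · simpa using h3
          · intro j; simpa using hle j
        · rw [Fin.sum_cons, hd]; ring
        · rw [Fin.sum_cons, hr]; ring
      · rintro ⟨dd, rr, hle, hd, hr⟩
        have hterm : 0 < phiCoeff (dd 0) (rr 0) *
            phiPow k (d - dd 0) (r - rr 0) := by
          apply mul_pos
          · exact (phiCoeff_pos_iff _ _).mpr (hle 0)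
          · apply (phiPow_pos_iff k _ _).mpr
            refine ⟨fun i => dd i.succ, fun i => rr i.succ, fun i => hle i.succ, ?_, ?_⟩
            · rw [← hd, Fin.sum_univ_succ]; ring
            · rw [← hr, Fin.sum_univ_succ]; ring
        rw [tsum_eq_sum (s := Finset.Icc (0:ℤ) d ×ˢ Finset.Icc (-(2*d+2)) (2*d+2))
          (fun p hp => phiPow_term_supp k d r p hp)]
        apply Finset.sum_pos'
          (fun p _ => mul_nonneg (phiCoeff_nonneg p.1 p.2) (phiPow_nonneg k _ _))
        refine ⟨(dd 0, rr 0), ?_, hterm⟩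
        by_contra hmem
        rw [phiPow_term_supp k d r _ hmem] at hterm
        exact lt_irrefl _ hterm
lemma p24_ne (k : ℤ) : p24 k ≠ 0 ↔ -1 ≤ k := by
  rw [← Nat.pos_iff_ne_zero, p24_pos]
lemma FCoeff_term_supp (n : ℕ) (d r : ℤ) (e : ℤ) (he : e ∉ Finset.Icc (0:ℤ) (d+1)) :
    phiPow (n - 1) e r * (p24 (d - e) : ℝ) = 0 := by
  by_contra h
  obtain ⟨h1, h2⟩ := mul_ne_zero_iff.mp h
  have h3 := phiPow_supp _ _ _ h1
  have h4 : p24 (d - e) ≠ 0 := fun h0 => h2 (by rw [h0]; norm_num)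
  have h5 := (p24_ne _).mp h4
  rw [Finset.mem_Icc] at he
  omega
lemma FCoeff_pos_iff (n : ℕ) (d r : ℤ) :
    0 < FCoeff n d r ↔ ∃ e : ℤ, 0 < phiPow (n - 1) e r ∧ -1 ≤ d - e := by
  constructor
  · intro h
    obtain ⟨e, he⟩ : ∃ e : ℤ, phiPow (n - 1) e r * (p24 (d - e) : ℝ) ≠ 0 := by
      by_contra hc
      push_neg at hc
      unfold FCoeff at h
      rw [(tsum_congr hc).trans tsum_zero] at h
      exact lt_irrefl _ h
    obtain ⟨h1, h2⟩ := mul_ne_zero_iff.mp he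
    refine ⟨e, lt_of_le_of_ne (phiPow_nonneg _ _ _) (Ne.symm h1), ?_⟩
    exact (p24_ne _).mp fun h0 => h2 (by rw [h0]; norm_num)
  · rintro ⟨e, h1, h2⟩
    unfold FCoeff
    rw [tsum_eq_sum (s := Finset.Icc (0:ℤ) (d+1)) (fun b hb => FCoeff_term_supp n d r b hb)]
    apply Finset.sum_pos' (fun b _ => mul_nonneg (phiPow_nonneg _ _ _) (Nat.cast_nonneg _))
    have hterm : 0 < phiPow (n - 1) e r * (p24 (d - e) : ℝ) := by
      apply mul_pos h1
      exact_mod_cast (p24_pos _).mpr h2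
    refine ⟨e, ?_, hterm⟩
    by_contra hmem
    rw [FCoeff_term_supp n d r e hmem] at hterm
    exact lt_irrefl _ hterm
lemma converse_aux (n : ℕ) (hn : 2 ≤ n) (d r : ℤ) (dd rr : Fin (n - 1) → ℤ)
    (hle : ∀ i, 0 ≤ 4 * dd i - (rr i) ^ 2)
    (hE : 2 * (d : ℚ) - (r : ℚ) ^ 2 / (2 * (n : ℚ) - 2)
      = -2 + (∑ i, 2 * (dd i : ℚ)) - (∑ i, (rr i : ℚ)) ^ 2 / (2 * (n : ℚ) - 2))
    (hdvd : (2 * (n : ℤ) - 2) ∣ r - ∑ i, rr i) :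
    0 < FCoeff n d r := by
  set S : ℤ := ∑ i, dd i with hS
  set R : ℤ := ∑ i, rr i with hR
  obtain ⟨m, hm⟩ := hdvd
  have hm' : r = R + (2 * (n : ℤ) - 2) * m := by omega
  have hNQ : (2 * (n : ℚ) - 2) ≠ 0 := by
    have : (2 : ℚ) ≤ (n : ℚ) := by exact_mod_cast hn
    linarith
  -- clear denominators
  have hE' : (2 * (d : ℚ) - (r : ℚ) ^ 2 / (2 * (n : ℚ) - 2)) * (2 * (n : ℚ) - 2)
      = (-2 + (∑ i, 2 * (dd i : ℚ)) - (∑ i, (rr i : ℚ)) ^ 2 / (2 * (n : ℚ) - 2))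
        * (2 * (n : ℚ) - 2) := by rw [hE]
  have e1 : (2 * (d : ℚ) - (r : ℚ) ^ 2 / (2 * (n : ℚ) - 2)) * (2 * (n : ℚ) - 2)
      = 2 * (d : ℚ) * (2 * (n : ℚ) - 2) - (r : ℚ) ^ 2 := by
    rw [sub_mul, div_mul_cancel₀ _ hNQ]
  have e2 : (-2 + (∑ i, 2 * (dd i : ℚ)) - (∑ i, (rr i : ℚ)) ^ 2 / (2 * (n : ℚ) - 2))
        * (2 * (n : ℚ) - 2)
      = (-2 + (∑ i, 2 * (dd i : ℚ))) * (2 * (n : ℚ) - 2) - (∑ i, (rr i : ℚ)) ^ 2 := by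
    rw [sub_mul, div_mul_cancel₀ _ hNQ]
  rw [e1, e2] at hE'
  have hSQ : (∑ i, 2 * (dd i : ℚ)) = ((2 * S : ℤ) : ℚ) := by
    push_cast [hS, Finset.mul_sum]
    rfl
  have hRQ : (∑ i, (rr i : ℚ)) = ((R : ℤ) : ℚ) := by
    push_cast [hR]
    rfl
  rw [hSQ, hRQ] at hE'
  have hZ : 2 * d * (2 * (n : ℤ) - 2) - r ^ 2
      = (-2 + 2 * S) * (2 * (n : ℤ) - 2) - R ^ 2 := by
    exact_mod_cast hE'
  -- derive the integer relation d = -1 + S + R*m + (n-1)*m^2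
  have h2 : (2 * (2 * (n : ℤ) - 2)) * d
      = (2 * (2 * (n : ℤ) - 2)) * (-1 + S + R * m + ((n : ℤ) - 1) * m ^ 2) := by
    linear_combination hZ + (r + R + (2 * (n : ℤ) - 2) * m) * hm'
  have hNZ : (2 * (2 * (n : ℤ) - 2)) ≠ 0 := by
    have : (2 : ℤ) ≤ (n : ℤ) := by exact_mod_cast hn
    omega
  have hd1 : d = -1 + S + R * m + ((n : ℤ) - 1) * m ^ 2 := mul_left_cancel₀ hNZ h2
  -- the shifted decomposition
  set dd' : Fin (n - 1) → ℤ := fun i => dd i + rr i * m + m ^ 2 with hdd'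
  set rr' : Fin (n - 1) → ℤ := fun i => rr i + 2 * m with hrr'
  have hcard : ((n - 1 : ℕ) : ℤ) = (n : ℤ) - 1 := by omega
  have hsum_dd' : ∑ i, dd' i = S + R * m + ((n : ℤ) - 1) * m ^ 2 := by
    rw [hdd']
    rw [Finset.sum_add_distrib, Finset.sum_add_distrib, ← Finset.sum_mul,
      Finset.sum_const, Finset.card_univ, Fintype.card_fin, nsmul_eq_mul, hcard]
  have hsum_rr' : ∑ i, rr' i = r := by
    rw [hrr', Finset.sum_add_distrib, Finset.sum_const, Finset.card_univ,
      Fintype.card_fin, nsmul_eq_mul, hcard, ← hR]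
    linear_combination -hm' 
  rw [FCoeff_pos_iff]
  refine ⟨d + 1, ?_, by omega⟩
  rw [phiPow_pos_iff]
  refine ⟨dd', rr', ?_, ?_, hsum_rr'⟩
  · intro i
    have := hle i
    simp only [hdd', hrr']
    nlinarith [this]
  · rw [hsum_dd']
    omega

theorem stmt15 (n : ℕ) (hn : 2 ≤ n) (d r : ℤ) :
    0 < FCoeff n d r ↔
      ∃ dd rr : Fin (n - 1) → ℤ,
        (∀ i, 0 ≤ 4 * dd i - (rr i) ^ 2) ∧     -- 2dᵢ − rᵢ²/2 ≥ 0
        (2 * (d : ℚ) - (r : ℚ) ^ 2 / (2 * (n : ℚ) - 2)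
          = -2 + (∑ i, 2 * (dd i : ℚ))
              - (∑ i, (rr i : ℚ)) ^ 2 / (2 * (n : ℚ) - 2)) ∧
        (r ≡ ∑ i, rr i [ZMOD (2 * (n : ℤ) - 2)] ∨
         r ≡ -∑ i, rr i [ZMOD (2 * (n : ℤ) - 2)]) := by
  constructor
  · intro h
    obtain ⟨e, h1, h2⟩ := (FCoeff_pos_iff n d r).mp h
    obtain ⟨dd, rr, hle, hd, hr⟩ := (phiPow_pos_iff _ _ _).mp h1
    have hfin : 0 < n - 1 := by omega
    set i₀ : Fin (n - 1) := ⟨0, hfin⟩ with hi₀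
    set dd' : Fin (n - 1) → ℤ := Function.update dd i₀ (dd i₀ + (d + 1 - e)) with hdd'
    have hsum : ∑ i, dd' i = d + 1 := by
      rw [hdd', Finset.sum_update_of_mem (Finset.mem_univ i₀)]
      have : ∑ i ∈ Finset.univ \ {i₀}, dd i = (∑ i, dd i) - dd i₀ := by
        rw [Finset.sum_sdiff_eq_sub (Finset.singleton_subset_iff.mpr (Finset.mem_univ i₀))]
        simp
      rw [this, hd]
      omega
    refine ⟨dd', rr, ?_, ?_, Or.inl (by rw [hr])⟩
    · intro i
      rw [hdd']
      rcases eq_or_ne i i₀ with hi | hi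
      · rw [hi, Function.update_self]
        have := hle i₀
        linarith
      · rw [Function.update_of_ne hi]
        linarith [hle i]
    · have h1' : (∑ i, 2 * (dd' i : ℚ)) = 2 * (((∑ i, dd' i : ℤ) : ℚ)) := by
        push_cast
        rw [Finset.mul_sum]
      have h2' : (∑ i, (rr i : ℚ)) = ((r : ℤ) : ℚ) := by
        rw [← hr]
        push_cast
        rfl
      rw [h1', h2', hsum]
      push_cast
      ring
  · rintro ⟨dd, rr, hle, hE, hcong | hcong⟩
    · exact converse_aux n hn d r dd rr hle hE (dvd_sub_comm.mp hcong.dvd)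
    · apply converse_aux n hn d r dd (fun i => -(rr i))
      · intro i
        have := hle i
        simp only [neg_sq]
        linarith
      · have hsneg : (∑ i : Fin (n - 1), ((-(rr i) : ℤ) : ℚ))
            = -(∑ i : Fin (n - 1), ((rr i : ℤ) : ℚ)) := by
          push_cast
          exact Finset.sum_neg_distrib _
        rw [hsneg, neg_sq]
        exact hE
      · obtain ⟨c, hc⟩ := hcong.dvd
        refine ⟨-c, ?_⟩
        rw [Finset.sum_neg_distrib]
        linear_combination -hc
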